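/- (Appendix IV / tetrahedral ensemble) Let E_Tet be the set of four qubit states ρ_m with Bloch vectors m = (1/√3)(±1, ±1, ±1) satisfying m_x m_y m_z = +1/(3√3) · 3√3 > 0 (i.e., the product of the three signs is +1). There exists a family {π_{[i,j,k]}}_{i,j,k∈{±1}} of positive semidefinite 4×4 complex matrices with Σ_{i,j,k} π_{[i,j,k]} = I⊗I such that for every ρ_m ∈ E_Tet: Σ_{j,k} Tr[π_{[i,j,k]} (ρ_m ⊗ ρ_m)] = (1/2)(1 + i·m_x) for each i ∈ {±1}, Σ_{i,k} Tr[π_{[i,j,k]} (ρ_m ⊗ ρ_m)] = (1/2)(1 + j·m_y) for each j ∈ {±1}, and Σ_{i,j} Tr[π_{[i,j,k]} (ρ_m ⊗ ρ_m)] = (1/2)(1 + k·m_z) for each k ∈ {±1}; i.e., the sharp observables X, Y, Z are jointly measurable on parallel pairs drawn from the tetrahedral ensemble E_Tet. -/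

import Mathlib

open Matrix Complex
open scoped Kronecker Matrix ComplexOrder

noncomputable section

/-- Pauli matrix σ_x. -/
def σx : Matrix (Fin 2) (Fin 2) ℂ := !![0, 1; 1, 0]
/-- Pauli matrix σ_y. -/
def σy : Matrix (Fin 2) (Fin 2) ℂ := !![0, -Complex.I; Complex.I, 0]
/-- Pauli matrix σ_z. -/
def σz : Matrix (Fin 2) (Fin 2) ℂ := !![1, 0; 0, -1]

/-- The two-element set {+1, -1} of outcomes/signs. -/
def pm : Finset ℝ := {1, -1}

/-- Qubit state with Bloch vector m: ρ_m = (1/2)(I + m·σ). -/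
def rho (m : Fin 3 → ℝ) : Matrix (Fin 2) (Fin 2) ℂ :=
  (2 : ℂ)⁻¹ • ((1 : Matrix (Fin 2) (Fin 2) ℂ) + (m 0 : ℂ) • σx + (m 1 : ℂ) • σy + (m 2 : ℂ) • σz)

/-- The antiparallel-configuration effects Π↑↓_{[i,j,k]}. -/
def PiAnti (i j k : ℝ) : Matrix (Fin 2 × Fin 2) (Fin 2 × Fin 2) ℂ :=
  (16 : ℂ)⁻¹ • ((2 : ℂ) • (1 : Matrix (Fin 2 × Fin 2) (Fin 2 × Fin 2) ℂ)
    + (i : ℂ) • (σx ⊗ₖ (1 : Matrix (Fin 2) (Fin 2) ℂ) - (1 : Matrix (Fin 2) (Fin 2) ℂ) ⊗ₖ σx)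
    + (j : ℂ) • (σy ⊗ₖ (1 : Matrix (Fin 2) (Fin 2) ℂ) - (1 : Matrix (Fin 2) (Fin 2) ℂ) ⊗ₖ σy)
    + (k : ℂ) • (σz ⊗ₖ (1 : Matrix (Fin 2) (Fin 2) ℂ) - (1 : Matrix (Fin 2) (Fin 2) ℂ) ⊗ₖ σz)
    - ((i * j : ℝ) : ℂ) • (σx ⊗ₖ σy + σy ⊗ₖ σx)
    - ((j * k : ℝ) : ℂ) • (σy ⊗ₖ σz + σz ⊗ₖ σy)
    - ((k * i : ℝ) : ℂ) • (σz ⊗ₖ σx + σx ⊗ₖ σz))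

/-- The GPT effects Π#_{[i,j,k]}. -/
def PiSharp (i j k : ℝ) : Matrix (Fin 2 × Fin 2) (Fin 2 × Fin 2) ℂ :=
  (16 : ℂ)⁻¹ • ((2 : ℂ) • (1 : Matrix (Fin 2 × Fin 2) (Fin 2 × Fin 2) ℂ)
    + (i : ℂ) • (σx ⊗ₖ (1 : Matrix (Fin 2) (Fin 2) ℂ) + (1 : Matrix (Fin 2) (Fin 2) ℂ) ⊗ₖ σx)
    + (j : ℂ) • (σy ⊗ₖ (1 : Matrix (Fin 2) (Fin 2) ℂ) + (1 : Matrix (Fin 2) (Fin 2) ℂ) ⊗ₖ σy)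
    + (k : ℂ) • (σz ⊗ₖ (1 : Matrix (Fin 2) (Fin 2) ℂ) + (1 : Matrix (Fin 2) (Fin 2) ℂ) ⊗ₖ σz)
    + ((i * j : ℝ) : ℂ) • (σx ⊗ₖ σy + σy ⊗ₖ σx)
    + ((j * k : ℝ) : ℂ) • (σy ⊗ₖ σz + σz ⊗ₖ σy)
    + ((k * i : ℝ) : ℂ) • (σz ⊗ₖ σx + σx ⊗ₖ σz))

end

noncomputable section

/-- The parallel-configuration effects Π↑↑_{[i,j,k]} of Carmeli et al. -/
def PiPar (i j k : ℝ) : Matrix (Fin 2 × Fin 2) (Fin 2 × Fin 2) ℂ :=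
  (32 : ℂ)⁻¹ • ((4 : ℂ) • (1 : Matrix (Fin 2 × Fin 2) (Fin 2 × Fin 2) ℂ)
    + ((Real.sqrt 3 * i : ℝ) : ℂ) • (σx ⊗ₖ (1 : Matrix (Fin 2) (Fin 2) ℂ) + (1 : Matrix (Fin 2) (Fin 2) ℂ) ⊗ₖ σx)
    + ((Real.sqrt 3 * j : ℝ) : ℂ) • (σy ⊗ₖ (1 : Matrix (Fin 2) (Fin 2) ℂ) + (1 : Matrix (Fin 2) (Fin 2) ℂ) ⊗ₖ σy)
    + ((Real.sqrt 3 * k : ℝ) : ℂ) • (σz ⊗ₖ (1 : Matrix (Fin 2) (Fin 2) ℂ) + (1 : Matrix (Fin 2) (Fin 2) ℂ) ⊗ₖ σz)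
    + ((i * j : ℝ) : ℂ) • (σx ⊗ₖ σy + σy ⊗ₖ σx)
    + ((j * k : ℝ) : ℂ) • (σy ⊗ₖ σz + σz ⊗ₖ σy)
    + ((k * i : ℝ) : ℂ) • (σz ⊗ₖ σx + σx ⊗ₖ σz))

/-- The universal spin-flip (transformation) map F(A) = (Tr A)·I − A. -/
def Flip (A : Matrix (Fin 2) (Fin 2) ℂ) : Matrix (Fin 2) (Fin 2) ℂ :=
  A.trace • (1 : Matrix (Fin 2) (Fin 2) ℂ) - A

/-- The map id ⊗ Φ on M₂(ℂ) ⊗ M₂(ℂ), acting as A ⊗ B ↦ A ⊗ Φ(B) extended linearly. -/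
def idTensor (Φ : Matrix (Fin 2) (Fin 2) ℂ → Matrix (Fin 2) (Fin 2) ℂ)
    (M : Matrix (Fin 2 × Fin 2) (Fin 2 × Fin 2) ℂ) : Matrix (Fin 2 × Fin 2) (Fin 2 × Fin 2) ℂ :=
  Matrix.of fun p q => Φ (Matrix.of fun b d => M (p.1, b) (q.1, d)) p.2 q.2

/-- Choi matrix Σ_{k,l} E_{kl} ⊗ Λ(E_{kl}) of a linear map Λ on M₂(ℂ). -/
def Choi (Λ : Matrix (Fin 2) (Fin 2) ℂ →ₗ[ℂ] Matrix (Fin 2) (Fin 2) ℂ) :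
    Matrix (Fin 2 × Fin 2) (Fin 2 × Fin 2) ℂ :=
  ∑ k : Fin 2, ∑ l : Fin 2,
    (Matrix.single k l (1 : ℂ)) ⊗ₖ Λ (Matrix.single k l (1 : ℂ))

/-- Sign value of a Boolean outcome: true ↦ +1, false ↦ −1. -/
def sgn (b : Bool) : ℝ := if b then 1 else -1

/-- Unsharp spin effect P^a_{n̂,λ} = (1/2)(I + λ a n̂·σ). -/
def Peff (n : Fin 3 → ℝ) (lam a : ℝ) : Matrix (Fin 2) (Fin 2) ℂ :=
  (2 : ℂ)⁻¹ • ((1 : Matrix (Fin 2) (Fin 2) ℂ)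
    + ((lam * a * n 0 : ℝ) : ℂ) • σx + ((lam * a * n 1 : ℝ) : ℂ) • σy
    + ((lam * a * n 2 : ℝ) : ℂ) • σz)

/-- Computational basis vector |ab⟩ of ℂ²⊗ℂ². -/
def ket (a b : Fin 2) : Fin 2 × Fin 2 → ℂ := fun p => if p = (a, b) then 1 else 0

/-- Bell vector |φ⁺⟩. -/
def phiP : Fin 2 × Fin 2 → ℂ := ((Real.sqrt 2 : ℝ) : ℂ)⁻¹ • (ket 0 0 + ket 1 1)
/-- Bell vector |φ⁻⟩. -/
def phiM : Fin 2 × Fin 2 → ℂ := ((Real.sqrt 2 : ℝ) : ℂ)⁻¹ • (ket 0 0 - ket 1 1)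
/-- Bell vector |ψ⁺⟩. -/
def psiP : Fin 2 × Fin 2 → ℂ := ((Real.sqrt 2 : ℝ) : ℂ)⁻¹ • (ket 0 1 + ket 1 0)
/-- Bell vector |ψ⁻⟩. -/
def psiM : Fin 2 × Fin 2 → ℂ := ((Real.sqrt 2 : ℝ) : ℂ)⁻¹ • (ket 0 1 - ket 1 0)

/-- The vector |ξ_{[i,j,k]}⟩ = (1/2)(|ψ⁻⟩ − i|φ⁻⟩ + 𝐢 j|φ⁺⟩ + k|ψ⁺⟩). -/
def xi (i j k : ℝ) : Fin 2 × Fin 2 → ℂ :=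
  (2 : ℂ)⁻¹ • (psiM - (i : ℂ) • phiM + (Complex.I * (j : ℂ)) • phiP + (k : ℂ) • psiP)

end


noncomputable section TetAux

lemma rho_eq' (m : Fin 3 → ℝ) : rho m =
    !![(1 + (m 2 : ℂ))/2, ((m 0 : ℂ) - Complex.I * (m 1 : ℂ))/2;
       ((m 0 : ℂ) + Complex.I * (m 1 : ℂ))/2, (1 - (m 2 : ℂ))/2] := by
  ext i j
  fin_cases i <;> fin_cases j <;>
    simp [rho, σx, σy, σz, Matrix.one_apply] <;> ring

lemma rho_herm' (m : Fin 3 → ℝ) : (rho m)ᴴ = rho m := by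
  rw [rho_eq']
  ext i j
  fin_cases i <;> fin_cases j <;>
    simp [Matrix.conjTranspose_apply, Complex.ext_iff]

lemma rho_idem' (m : Fin 3 → ℝ) (hm : (m 0)^2 + (m 1)^2 + (m 2)^2 = 1) :
    rho m * rho m = rho m := by
  have hmC : ((m 0 : ℂ))^2 + ((m 1 : ℂ))^2 + ((m 2 : ℂ))^2 = 1 := by exact_mod_cast hm
  rw [rho_eq']
  ext i j
  fin_cases i <;> fin_cases j <;>
    simp [Matrix.mul_apply, Fin.sum_univ_two]
  · linear_combination (1/4 : ℂ) * hmC + (-1/4 : ℂ) * ((m 1:ℂ))^2 * Complex.I_sq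
  · ring
  · ring
  · linear_combination (1/4 : ℂ) * hmC + (-1/4 : ℂ) * ((m 1:ℂ))^2 * Complex.I_sq

lemma kron_ct' (A B : Matrix (Fin 2) (Fin 2) ℂ) : (A ⊗ₖ B)ᴴ = Aᴴ ⊗ₖ Bᴴ := by
  ext p q
  simp [Matrix.conjTranspose_apply, Matrix.kroneckerMap_apply, star_mul']
  try ring

def Panti' : Matrix (Fin 2 × Fin 2) (Fin 2 × Fin 2) ℂ :=
  (4:ℂ)⁻¹ • ((1 : Matrix (Fin 2 × Fin 2) (Fin 2 × Fin 2) ℂ) - σx ⊗ₖ σx - σy ⊗ₖ σy - σz ⊗ₖ σz)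

set_option maxHeartbeats 1600000 in
lemma Panti_herm' : Panti'ᴴ = Panti' := by
  ext ⟨a,b⟩ ⟨c,d⟩
  fin_cases a <;> fin_cases b <;> fin_cases c <;> fin_cases d <;>
    simp (config := { decide := true }) [Panti', Matrix.conjTranspose_apply, σx, σy, σz,
      Matrix.one_apply, Complex.ext_iff]

set_option maxHeartbeats 1600000 in
lemma Panti_idem' : Panti' * Panti' = Panti' := by
  ext ⟨a,b⟩ ⟨c,d⟩
  fin_cases a <;> fin_cases b <;> fin_cases c <;> fin_cases d <;>
    · simp (config := { decide := true }) [Panti', Matrix.mul_apply, Fintype.sum_prod_type,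
        Fin.sum_univ_two, σx, σy, σz, Matrix.one_apply]
      try norm_num [Complex.ext_iff]

lemma Panti_psd' : Panti'.PosSemidef := by
  have h := Matrix.posSemidef_conjTranspose_mul_self Panti'
  rwa [Panti_herm', Panti_idem'] at h

def tet (ex ey ez : ℝ) : Matrix (Fin 2 × Fin 2) (Fin 2 × Fin 2) ℂ :=
  rho ![ex / Real.sqrt 3, ey / Real.sqrt 3, ez / Real.sqrt 3] ⊗ₖ
    rho ![ex / Real.sqrt 3, ey / Real.sqrt 3, ez / Real.sqrt 3]

lemma sqrt3_mul' : Real.sqrt 3 * Real.sqrt 3 = 3 := Real.mul_self_sqrt (by norm_num)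

lemma sqrt3_ne' : Real.sqrt 3 ≠ 0 := by positivity

lemma tet_norm' {e : ℝ} (he : e = 1 ∨ e = -1) : (e / Real.sqrt 3)^2 = 1/3 := by
  have h3 : Real.sqrt 3 ^ 2 = 3 := Real.sq_sqrt (by norm_num)
  rcases he with h | h <;> subst h <;> field_simp <;> try linarith [h3]

lemma tet_idem {ex ey ez : ℝ} (hx : ex = 1 ∨ ex = -1) (hy : ey = 1 ∨ ey = -1)
    (hz : ez = 1 ∨ ez = -1) : tet ex ey ez * tet ex ey ez = tet ex ey ez := by
  have hid : rho ![ex / Real.sqrt 3, ey / Real.sqrt 3, ez / Real.sqrt 3] *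
      rho ![ex / Real.sqrt 3, ey / Real.sqrt 3, ez / Real.sqrt 3] =
      rho ![ex / Real.sqrt 3, ey / Real.sqrt 3, ez / Real.sqrt 3] := by
    apply rho_idem'
    simp only [Matrix.cons_val_zero, Matrix.cons_val_one, Matrix.head_cons,
      Matrix.cons_val_two, Matrix.tail_cons]
    rw [tet_norm' hx, tet_norm' hy, tet_norm' hz]
    norm_num
  unfold tet
  rw [← Matrix.mul_kronecker_mul, hid]

lemma tet_psd {ex ey ez : ℝ} (hx : ex = 1 ∨ ex = -1) (hy : ey = 1 ∨ ey = -1)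
    (hz : ez = 1 ∨ ez = -1) : (tet ex ey ez).PosSemidef := by
  have h := Matrix.posSemidef_conjTranspose_mul_self (tet ex ey ez)
  have hh : (tet ex ey ez)ᴴ = tet ex ey ez := by
    unfold tet; rw [kron_ct', rho_herm']
  rwa [hh, tet_idem hx hy hz] at h

lemma smul_psd' {c : ℝ} (hc : 0 ≤ c) {M : Matrix (Fin 2 × Fin 2) (Fin 2 × Fin 2) ℂ}
    (hM : M.PosSemidef) : ((c : ℂ) • M).PosSemidef := by
  constructor
  · have : ((c:ℂ) • M)ᴴ = (c:ℂ) • M := by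
      rw [Matrix.conjTranspose_smul, hM.1.eq]
      congr 1
      simp [Complex.star_def, Complex.conj_ofReal]
    exact this
  · intro x
    exact (hM.smul (show (0:ℂ) ≤ (c:ℂ) by exact_mod_cast hc)).2 x

def Eef (ex ey ez : ℝ) : Matrix (Fin 2 × Fin 2) (Fin 2 × Fin 2) ℂ :=
  ((3/4 : ℝ) : ℂ) • tet ex ey ez + ((1/4 : ℝ) : ℂ) • Panti'

lemma Eef_psd {ex ey ez : ℝ} (hx : ex = 1 ∨ ex = -1) (hy : ey = 1 ∨ ey = -1)
    (hz : ez = 1 ∨ ez = -1) : (Eef ex ey ez).PosSemidef :=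
  (smul_psd' (by norm_num) (tet_psd hx hy hz)).add (smul_psd' (by norm_num) Panti_psd')

def wgt (i e : ℝ) : ℝ := (1 + i * e * Real.sqrt 3 / 2) / 2

lemma wgt_nonneg {i e : ℝ} (hi : i = 1 ∨ i = -1) (he : e = 1 ∨ e = -1) : 0 ≤ wgt i e := by
  have h3 : Real.sqrt 3 ^ 2 = 3 := Real.sq_sqrt (by norm_num)
  have h0 : (0:ℝ) ≤ Real.sqrt 3 := Real.sqrt_nonneg 3
  rcases hi with h | h <;> rcases he with h' | h' <;> subst h <;> subst h' <;>
    simp [wgt] <;> nlinarith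

def piT (i j k : ℝ) : Matrix (Fin 2 × Fin 2) (Fin 2 × Fin 2) ℂ :=
  ((wgt i 1 * wgt j 1 * wgt k 1 : ℝ) : ℂ) • Eef 1 1 1
  + ((wgt i 1 * wgt j (-1) * wgt k (-1) : ℝ) : ℂ) • Eef 1 (-1) (-1)
  + ((wgt i (-1) * wgt j 1 * wgt k (-1) : ℝ) : ℂ) • Eef (-1) 1 (-1)
  + ((wgt i (-1) * wgt j (-1) * wgt k 1 : ℝ) : ℂ) • Eef (-1) (-1) 1

lemma piT_psd {i j k : ℝ} (hi : i = 1 ∨ i = -1) (hj : j = 1 ∨ j = -1) (hk : k = 1 ∨ k = -1) :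
    (piT i j k).PosSemidef := by
  refine Matrix.PosSemidef.add (Matrix.PosSemidef.add (Matrix.PosSemidef.add ?_ ?_) ?_) ?_ <;>
    refine smul_psd' (mul_nonneg (mul_nonneg (wgt_nonneg hi ?_) (wgt_nonneg hj ?_))
      (wgt_nonneg hk ?_)) (Eef_psd ?_ ?_ ?_) <;> norm_num

lemma trace_rho_rho' (m1 m2 : Fin 3 → ℝ) : (rho m1 * rho m2).trace =
    (((1 + (m1 0 * m2 0 + m1 1 * m2 1 + m1 2 * m2 2))/2 : ℝ) : ℂ) := by
  rw [rho_eq', rho_eq']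
  simp [Matrix.trace, Matrix.diag, Matrix.mul_apply, Fin.sum_univ_two]
  linear_combination (-(m1 1 : ℂ) * (m2 1 : ℂ)/2) * Complex.I_sq

lemma trace_sx_rho (m : Fin 3 → ℝ) : (σx * rho m).trace = ((m 0 : ℝ) : ℂ) := by
  rw [rho_eq']
  simp [Matrix.trace, Matrix.diag, Matrix.mul_apply, Fin.sum_univ_two, σx]
  ring

lemma trace_sy_rho (m : Fin 3 → ℝ) : (σy * rho m).trace = ((m 1 : ℝ) : ℂ) := by
  rw [rho_eq']
  simp [Matrix.trace, Matrix.diag, Matrix.mul_apply, Fin.sum_univ_two, σy]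
  linear_combination (-(m 1 : ℂ)) * Complex.I_sq

lemma trace_sz_rho (m : Fin 3 → ℝ) : (σz * rho m).trace = ((m 2 : ℝ) : ℂ) := by
  rw [rho_eq']
  simp [Matrix.trace, Matrix.diag, Matrix.mul_apply, Fin.sum_univ_two, σz]
  ring

lemma trace_rho1 (m : Fin 3 → ℝ) : (rho m).trace = 1 := by
  rw [rho_eq']
  simp [Matrix.trace, Matrix.diag, Fin.sum_univ_two]
  ring

lemma trace_kron2 (A B : Matrix (Fin 2) (Fin 2) ℂ) :
    ((A ⊗ₖ A) * (B ⊗ₖ B)).trace = ((A * B).trace)^2 := by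
  rw [← Matrix.mul_kronecker_mul, Matrix.trace_kronecker]; ring

lemma trace_Panti_kron (B : Matrix (Fin 2) (Fin 2) ℂ) :
    (Panti' * (B ⊗ₖ B)).trace = (4:ℂ)⁻¹ * ((B.trace)^2
      - ((σx * B).trace)^2 - ((σy * B).trace)^2 - ((σz * B).trace)^2) := by
  unfold Panti'
  rw [Matrix.smul_mul, Matrix.sub_mul, Matrix.sub_mul, Matrix.sub_mul, Matrix.one_mul,
    ← Matrix.mul_kronecker_mul, ← Matrix.mul_kronecker_mul, ← Matrix.mul_kronecker_mul,
    Matrix.trace_smul, Matrix.trace_sub, Matrix.trace_sub, Matrix.trace_sub,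
    Matrix.trace_kronecker, Matrix.trace_kronecker, Matrix.trace_kronecker,
    Matrix.trace_kronecker, smul_eq_mul]
  try ring

lemma trace_Eef_tet (ax ay az bx by' bz : ℝ)
    (hb : (bx/Real.sqrt 3)^2 + (by'/Real.sqrt 3)^2 + (bz/Real.sqrt 3)^2 = 1) :
    (Eef ax ay az * tet bx by' bz).trace =
      ((3/4 * ((1 + (ax*bx + ay*by' + az*bz)/3)/2)^2 : ℝ) : ℂ) := by
  have hdot : ax/Real.sqrt 3 * (bx/Real.sqrt 3) + ay/Real.sqrt 3 * (by'/Real.sqrt 3)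
      + az/Real.sqrt 3 * (bz/Real.sqrt 3) = (ax*bx + ay*by' + az*bz)/3 := by
    field_simp
    try rw [sqrt3_mul']
    rw [Real.sq_sqrt (by norm_num : (0:ℝ) ≤ 3)]
    try ring
  unfold Eef
  rw [Matrix.add_mul, Matrix.trace_add, Matrix.smul_mul, Matrix.smul_mul,
    Matrix.trace_smul, Matrix.trace_smul]
  unfold tet
  rw [trace_kron2, trace_Panti_kron, trace_rho_rho', trace_rho1, trace_sx_rho, trace_sy_rho,
    trace_sz_rho]
  simp only [Matrix.cons_val_zero, Matrix.cons_val_one, Matrix.head_cons, Matrix.cons_val_two,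
    Matrix.tail_cons, smul_eq_mul]
  rw [hdot]
  have hbC : ((bx/Real.sqrt 3 : ℝ) : ℂ)^2 + ((by'/Real.sqrt 3 : ℝ) : ℂ)^2
      + ((bz/Real.sqrt 3 : ℝ) : ℂ)^2 = 1 := by exact_mod_cast hb
  push_cast at hbC ⊢
  linear_combination (-(1:ℂ)/16) * hbC

lemma ht2 : ((Real.sqrt 3 : ℝ) : ℂ)^2 = 3 := by
  exact_mod_cast Real.sq_sqrt (by norm_num : (0:ℝ) ≤ 3)

lemma ht3 : ((Real.sqrt 3 : ℝ) : ℂ)^3 = 3 * ((Real.sqrt 3 : ℝ) : ℂ) := by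
  rw [pow_succ, ht2]; try ring

lemma ht4 : ((Real.sqrt 3 : ℝ) : ℂ)^4 = 9 := by
  rw [show (4:ℕ) = 2 + 2 from rfl, pow_add, ht2]; norm_num

lemma ht5 : ((Real.sqrt 3 : ℝ) : ℂ)^5 = 9 * ((Real.sqrt 3 : ℝ) : ℂ) := by
  rw [show (5:ℕ) = 4 + 1 from rfl, pow_add, ht4]; try ring

lemma ht6 : ((Real.sqrt 3 : ℝ) : ℂ)^6 = 27 := by
  rw [show (6:ℕ) = 4 + 2 from rfl, pow_add, ht4, ht2]; norm_num

lemma hI3 : Complex.I^3 = -Complex.I := by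
  rw [pow_succ, Complex.I_sq]; ring

lemma hI4 : Complex.I^4 = 1 := by
  rw [show (4:ℕ) = 2 + 2 from rfl, pow_add, Complex.I_sq]; norm_num

lemma hinv' : (((Real.sqrt 3 : ℝ) : ℂ))⁻¹ = ((Real.sqrt 3 : ℝ) : ℂ)/3 := by
  have h3 : ((Real.sqrt 3 : ℝ) : ℂ) * ((Real.sqrt 3 : ℝ) : ℂ) = 3 := by
    exact_mod_cast congrArg Complex.ofReal sqrt3_mul'
  have hne : ((Real.sqrt 3 : ℝ) : ℂ) ≠ 0 := by
    simpa using Real.sqrt_ne_zero'.mpr (by norm_num : (0:ℝ) < 3)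
  field_simp
  linear_combination -h3

set_option maxHeartbeats 3200000 in
lemma sumE : Eef 1 1 1 + Eef 1 (-1) (-1) + Eef (-1) 1 (-1) + Eef (-1) (-1) 1 = 1 := by
  ext ⟨a,b⟩ ⟨c,d⟩
  fin_cases a <;> fin_cases b <;> fin_cases c <;> fin_cases d <;>
    (try simp (config := { decide := true }) [Eef, tet, Panti', rho_eq', σx, σy, σz,
      Matrix.one_apply]) <;>
    (try push_cast) <;>
    (try simp only [div_eq_mul_inv, hinv']) <;>
    (try ring_nf) <;>
    (try simp only [Complex.I_sq, hI3, hI4, ht2, ht3, ht4, ht5, ht6]) <;>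
    (try ring_nf) <;>
    (try norm_num)

end TetAux

set_option maxHeartbeats 4000000 in
/-- Appendix IV: the sharp observables X, Y, Z are jointly measurable
on parallel pairs drawn from the tetrahedral ensemble, whose Bloch vectors are
(1/√3)(ε_x, ε_y, ε_z) with ε_x ε_y ε_z = +1. -/
theorem tetrahedral_parallel_sharp :
    ∃ π : ℝ → ℝ → ℝ → Matrix (Fin 2 × Fin 2) (Fin 2 × Fin 2) ℂ,
      (∀ i ∈ pm, ∀ j ∈ pm, ∀ k ∈ pm, (π i j k).PosSemidef) ∧
      (∑ i ∈ pm, ∑ j ∈ pm, ∑ k ∈ pm, π i j k = 1) ∧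
      ∀ ex ∈ pm, ∀ ey ∈ pm, ∀ ez ∈ pm, ex * ey * ez = 1 →
        (∀ i ∈ pm, ∑ j ∈ pm, ∑ k ∈ pm,
            (π i j k * (rho ![ex / Real.sqrt 3, ey / Real.sqrt 3, ez / Real.sqrt 3] ⊗ₖ rho ![ex / Real.sqrt 3, ey / Real.sqrt 3, ez / Real.sqrt 3])).trace
              = ((1 / 2 * (1 + i * (ex / Real.sqrt 3)) : ℝ) : ℂ)) ∧
        (∀ j ∈ pm, ∑ i ∈ pm, ∑ k ∈ pm,
            (π i j k * (rho ![ex / Real.sqrt 3, ey / Real.sqrt 3, ez / Real.sqrt 3] ⊗ₖ rho ![ex / Real.sqrt 3, ey / Real.sqrt 3, ez / Real.sqrt 3])).trace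
              = ((1 / 2 * (1 + j * (ey / Real.sqrt 3)) : ℝ) : ℂ)) ∧
        (∀ k ∈ pm, ∑ i ∈ pm, ∑ j ∈ pm,
            (π i j k * (rho ![ex / Real.sqrt 3, ey / Real.sqrt 3, ez / Real.sqrt 3] ⊗ₖ rho ![ex / Real.sqrt 3, ey / Real.sqrt 3, ez / Real.sqrt 3])).trace
              = ((1 / 2 * (1 + k * (ez / Real.sqrt 3)) : ℝ) : ℂ)) := by
  classical
  refine ⟨piT, ?_, ?_, ?_⟩
  · intro i hi j hj k hk
    simp only [pm, Finset.mem_insert, Finset.mem_singleton] at hi hj hk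
    exact piT_psd hi hj hk
  · simp only [pm, Finset.sum_pair (show (1:ℝ) ≠ -1 by norm_num)]
    rw [← sumE]
    simp only [piT, wgt]
    push_cast
    match_scalars <;> ring
  · intro ex hex ey hey ez hez hprod
    simp only [pm, Finset.mem_insert, Finset.mem_singleton] at hex hey hez
    have hten : ∀ a b c : ℝ, rho ![a / Real.sqrt 3, b / Real.sqrt 3, c / Real.sqrt 3] ⊗ₖ
        rho ![a / Real.sqrt 3, b / Real.sqrt 3, c / Real.sqrt 3] = tet a b c := fun _ _ _ => rfl
    rcases hex with hx | hx <;> rcases hey with hy | hy <;> rcases hez with hz | hz <;>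
      subst hx <;> subst hy <;> subst hz
    · -- case (1,1,1)
      have hb : ((1 : ℝ)/Real.sqrt 3)^2 + ((1 : ℝ)/Real.sqrt 3)^2
          + ((1 : ℝ)/Real.sqrt 3)^2 = 1 := by
        simp only [tet_norm' (Or.inl rfl), tet_norm' (Or.inr rfl)]
        norm_num
      have hA := trace_Eef_tet 1 1 1 1 1 1 hb
      have hB := trace_Eef_tet 1 (-1) (-1) 1 1 1 hb
      have hC := trace_Eef_tet (-1) 1 (-1) 1 1 1 hb
      have hD := trace_Eef_tet (-1) (-1) 1 1 1 1 hb
      refine ⟨?_, ?_, ?_⟩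
      · intro v hv
        simp only [pm, Finset.mem_insert, Finset.mem_singleton] at hv
        rcases hv with hv | hv <;> subst hv <;>
          simp only [pm, Finset.sum_pair (show (1:ℝ) ≠ -1 by norm_num), hten, piT,
            Matrix.add_mul, Matrix.smul_mul, Matrix.trace_add, Matrix.trace_smul,
            smul_eq_mul, hA, hB, hC, hD, wgt]
        all_goals
          push_cast
          simp only [div_eq_mul_inv, hinv']
          try ring_nf
          try simp only [Complex.I_sq, hI3, hI4, ht2, ht3, ht4, ht5, ht6]
          try ring_nf
          try norm_num
      · intro v hv
        simp only [pm, Finset.mem_insert, Finset.mem_singleton] at hv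
        rcases hv with hv | hv <;> subst hv <;>
          simp only [pm, Finset.sum_pair (show (1:ℝ) ≠ -1 by norm_num), hten, piT,
            Matrix.add_mul, Matrix.smul_mul, Matrix.trace_add, Matrix.trace_smul,
            smul_eq_mul, hA, hB, hC, hD, wgt]
        all_goals
          push_cast
          simp only [div_eq_mul_inv, hinv']
          try ring_nf
          try simp only [Complex.I_sq, hI3, hI4, ht2, ht3, ht4, ht5, ht6]
          try ring_nf
          try norm_num
      · intro v hv
        simp only [pm, Finset.mem_insert, Finset.mem_singleton] at hv
        rcases hv with hv | hv <;> subst hv <;>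
          simp only [pm, Finset.sum_pair (show (1:ℝ) ≠ -1 by norm_num), hten, piT,
            Matrix.add_mul, Matrix.smul_mul, Matrix.trace_add, Matrix.trace_smul,
            smul_eq_mul, hA, hB, hC, hD, wgt]
        all_goals
          push_cast
          simp only [div_eq_mul_inv, hinv']
          try ring_nf
          try simp only [Complex.I_sq, hI3, hI4, ht2, ht3, ht4, ht5, ht6]
          try ring_nf
          try norm_num
    · exfalso; norm_num at hprod
    · exfalso; norm_num at hprod
    · -- case (1,-1,-1)
      have hb : ((1 : ℝ)/Real.sqrt 3)^2 + (((-1) : ℝ)/Real.sqrt 3)^2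
          + (((-1) : ℝ)/Real.sqrt 3)^2 = 1 := by
        simp only [tet_norm' (Or.inl rfl), tet_norm' (Or.inr rfl)]
        norm_num
      have hA := trace_Eef_tet 1 1 1 1 (-1) (-1) hb
      have hB := trace_Eef_tet 1 (-1) (-1) 1 (-1) (-1) hb
      have hC := trace_Eef_tet (-1) 1 (-1) 1 (-1) (-1) hb
      have hD := trace_Eef_tet (-1) (-1) 1 1 (-1) (-1) hb
      refine ⟨?_, ?_, ?_⟩
      · intro v hv
        simp only [pm, Finset.mem_insert, Finset.mem_singleton] at hv
        rcases hv with hv | hv <;> subst hv <;>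
          simp only [pm, Finset.sum_pair (show (1:ℝ) ≠ -1 by norm_num), hten, piT,
            Matrix.add_mul, Matrix.smul_mul, Matrix.trace_add, Matrix.trace_smul,
            smul_eq_mul, hA, hB, hC, hD, wgt]
        all_goals
          push_cast
          simp only [div_eq_mul_inv, hinv']
          try ring_nf
          try simp only [Complex.I_sq, hI3, hI4, ht2, ht3, ht4, ht5, ht6]
          try ring_nf
          try norm_num
      · intro v hv
        simp only [pm, Finset.mem_insert, Finset.mem_singleton] at hv
        rcases hv with hv | hv <;> subst hv <;>
          simp only [pm, Finset.sum_pair (show (1:ℝ) ≠ -1 by norm_num), hten, piT,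
            Matrix.add_mul, Matrix.smul_mul, Matrix.trace_add, Matrix.trace_smul,
            smul_eq_mul, hA, hB, hC, hD, wgt]
        all_goals
          push_cast
          simp only [div_eq_mul_inv, hinv']
          try ring_nf
          try simp only [Complex.I_sq, hI3, hI4, ht2, ht3, ht4, ht5, ht6]
          try ring_nf
          try norm_num
      · intro v hv
        simp only [pm, Finset.mem_insert, Finset.mem_singleton] at hv
        rcases hv with hv | hv <;> subst hv <;>
          simp only [pm, Finset.sum_pair (show (1:ℝ) ≠ -1 by norm_num), hten, piT,
            Matrix.add_mul, Matrix.smul_mul, Matrix.trace_add, Matrix.trace_smul,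
            smul_eq_mul, hA, hB, hC, hD, wgt]
        all_goals
          push_cast
          simp only [div_eq_mul_inv, hinv']
          try ring_nf
          try simp only [Complex.I_sq, hI3, hI4, ht2, ht3, ht4, ht5, ht6]
          try ring_nf
          try norm_num
    · exfalso; norm_num at hprod
    · -- case (-1,1,-1)
      have hb : (((-1) : ℝ)/Real.sqrt 3)^2 + ((1 : ℝ)/Real.sqrt 3)^2
          + (((-1) : ℝ)/Real.sqrt 3)^2 = 1 := by
        simp only [tet_norm' (Or.inl rfl), tet_norm' (Or.inr rfl)]
        norm_num
      have hA := trace_Eef_tet 1 1 1 (-1) 1 (-1) hb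
      have hB := trace_Eef_tet 1 (-1) (-1) (-1) 1 (-1) hb
      have hC := trace_Eef_tet (-1) 1 (-1) (-1) 1 (-1) hb
      have hD := trace_Eef_tet (-1) (-1) 1 (-1) 1 (-1) hb
      refine ⟨?_, ?_, ?_⟩
      · intro v hv
        simp only [pm, Finset.mem_insert, Finset.mem_singleton] at hv
        rcases hv with hv | hv <;> subst hv <;>
          simp only [pm, Finset.sum_pair (show (1:ℝ) ≠ -1 by norm_num), hten, piT,
            Matrix.add_mul, Matrix.smul_mul, Matrix.trace_add, Matrix.trace_smul,
            smul_eq_mul, hA, hB, hC, hD, wgt]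
        all_goals
          push_cast
          simp only [div_eq_mul_inv, hinv']
          try ring_nf
          try simp only [Complex.I_sq, hI3, hI4, ht2, ht3, ht4, ht5, ht6]
          try ring_nf
          try norm_num
      · intro v hv
        simp only [pm, Finset.mem_insert, Finset.mem_singleton] at hv
        rcases hv with hv | hv <;> subst hv <;>
          simp only [pm, Finset.sum_pair (show (1:ℝ) ≠ -1 by norm_num), hten, piT,
            Matrix.add_mul, Matrix.smul_mul, Matrix.trace_add, Matrix.trace_smul,
            smul_eq_mul, hA, hB, hC, hD, wgt]
        all_goals
          push_cast
          simp only [div_eq_mul_inv, hinv']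
          try ring_nf
          try simp only [Complex.I_sq, hI3, hI4, ht2, ht3, ht4, ht5, ht6]
          try ring_nf
          try norm_num
      · intro v hv
        simp only [pm, Finset.mem_insert, Finset.mem_singleton] at hv
        rcases hv with hv | hv <;> subst hv <;>
          simp only [pm, Finset.sum_pair (show (1:ℝ) ≠ -1 by norm_num), hten, piT,
            Matrix.add_mul, Matrix.smul_mul, Matrix.trace_add, Matrix.trace_smul,
            smul_eq_mul, hA, hB, hC, hD, wgt]
        all_goals
          push_cast
          simp only [div_eq_mul_inv, hinv']
          try ring_nf
          try simp only [Complex.I_sq, hI3, hI4, ht2, ht3, ht4, ht5, ht6]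
          try ring_nf
          try norm_num
    · -- case (-1,-1,1)
      have hb : (((-1) : ℝ)/Real.sqrt 3)^2 + (((-1) : ℝ)/Real.sqrt 3)^2
          + ((1 : ℝ)/Real.sqrt 3)^2 = 1 := by
        simp only [tet_norm' (Or.inl rfl), tet_norm' (Or.inr rfl)]
        norm_num
      have hA := trace_Eef_tet 1 1 1 (-1) (-1) 1 hb
      have hB := trace_Eef_tet 1 (-1) (-1) (-1) (-1) 1 hb
      have hC := trace_Eef_tet (-1) 1 (-1) (-1) (-1) 1 hb
      have hD := trace_Eef_tet (-1) (-1) 1 (-1) (-1) 1 hb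
      refine ⟨?_, ?_, ?_⟩
      · intro v hv
        simp only [pm, Finset.mem_insert, Finset.mem_singleton] at hv
        rcases hv with hv | hv <;> subst hv <;>
          simp only [pm, Finset.sum_pair (show (1:ℝ) ≠ -1 by norm_num), hten, piT,
            Matrix.add_mul, Matrix.smul_mul, Matrix.trace_add, Matrix.trace_smul,
            smul_eq_mul, hA, hB, hC, hD, wgt]
        all_goals
          push_cast
          simp only [div_eq_mul_inv, hinv']
          try ring_nf
          try simp only [Complex.I_sq, hI3, hI4, ht2, ht3, ht4, ht5, ht6]
          try ring_nf
          try norm_num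
      · intro v hv
        simp only [pm, Finset.mem_insert, Finset.mem_singleton] at hv
        rcases hv with hv | hv <;> subst hv <;>
          simp only [pm, Finset.sum_pair (show (1:ℝ) ≠ -1 by norm_num), hten, piT,
            Matrix.add_mul, Matrix.smul_mul, Matrix.trace_add, Matrix.trace_smul,
            smul_eq_mul, hA, hB, hC, hD, wgt]
        all_goals
          push_cast
          simp only [div_eq_mul_inv, hinv']
          try ring_nf
          try simp only [Complex.I_sq, hI3, hI4, ht2, ht3, ht4, ht5, ht6]
          try ring_nf
          try norm_num
      · intro v hv
        simp only [pm, Finset.mem_insert, Finset.mem_singleton] at hv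
        rcases hv with hv | hv <;> subst hv <;>
          simp only [pm, Finset.sum_pair (show (1:ℝ) ≠ -1 by norm_num), hten, piT,
            Matrix.add_mul, Matrix.smul_mul, Matrix.trace_add, Matrix.trace_smul,
            smul_eq_mul, hA, hB, hC, hD, wgt]
        all_goals
          push_cast
          simp only [div_eq_mul_inv, hinv']
          try ring_nf
          try simp only [Complex.I_sq, hI3, hI4, ht2, ht3, ht4, ht5, ht6]
          try ring_nf
          try norm_num
    · exfalso; norm_num at hprod
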